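/- For T ≥ 1, m_* = 1/4, m_• = 1, and w_• = (2T+m_*+m_•)^5, the quantity K²·w_•·m_•²/((T+m_*+m_•)²·(T±K+m_*+m_•)·(T±K+m_*)) is strictly greater than 2T for all 1 ≤ K ≤ T, and 2T > Σ_{i=1}^{2T−(T±K)} 1/(T±K+m_*+m_•+i). -/

import Mathlib

open Finset

lemma key_frac (t k d2 d3 : ℝ) (ht : 1 ≤ t) (hk : 1 ≤ k)
    (hd2 : 0 < d2) (hd3 : 0 < d3)
    (h2 : d2 ≤ 2 * t + 5 / 4) (h3 : d3 ≤ 2 * t + 5 / 4) :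
    k ^ 2 * (2 * t + 1 / 4 + 1) ^ 5 * 1 ^ 2 / ((t + 1 / 4 + 1) ^ 2 * d2 * d3)
      > 2 * t := by
  have ha : (0 : ℝ) < 2 * t + 5 / 4 := by linarith
  set a := 2 * t + 5 / 4 with ha_def
  have hd1 : (0 : ℝ) < t + 1 / 4 + 1 := by linarith
  have hD : (0 : ℝ) < (t + 1 / 4 + 1) ^ 2 * d2 * d3 := by positivity
  rw [gt_iff_lt, lt_div_iff₀ hD]
  have e1 : (t + 1 / 4 + 1) ^ 2 ≤ a ^ 2 := by nlinarith
  have e2 : d2 * d3 ≤ a ^ 2 := by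
    calc d2 * d3 ≤ a * a := mul_le_mul h2 h3 hd3.le ha.le
      _ = a ^ 2 := (sq a).symm
  have hDa : (t + 1 / 4 + 1) ^ 2 * d2 * d3 ≤ a ^ 4 := by
    have := mul_le_mul e1 e2 (by positivity) (by positivity)
    nlinarith
  have hwb : (2 * t + 1 / 4 + 1) ^ 5 = a ^ 5 := by rw [ha_def]; ring
  have hchain : 2 * t * ((t + 1 / 4 + 1) ^ 2 * d2 * d3) < a ^ 5 := by
    calc 2 * t * ((t + 1 / 4 + 1) ^ 2 * d2 * d3)
        ≤ 2 * t * a ^ 4 := by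
          exact mul_le_mul_of_nonneg_left hDa (by linarith)
      _ < a * a ^ 4 := by
          have h2t : 2 * t < a := by rw [ha_def]; linarith
          exact mul_lt_mul_of_pos_right h2t (by positivity)
      _ = a ^ 5 := by ring
  have hk5 : a ^ 5 ≤ k ^ 2 * (2 * t + 1 / 4 + 1) ^ 5 * 1 ^ 2 := by
    rw [hwb]
    have hk2 : 1 ≤ k ^ 2 := by nlinarith
    nlinarith [pow_pos ha 5]
  linarith

lemma key_sum (T : ℕ) (hT : 1 ≤ T) (n : ℕ) (hn : n ≤ 2 * T) (c : ℝ) (hc : 1 ≤ c) :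
    ∑ i ∈ Finset.Icc 1 n, 1 / (c + (i : ℝ)) < 2 * (T : ℝ) := by
  have hT' : (1 : ℝ) ≤ (T : ℝ) := by exact_mod_cast hT
  have hn' : (n : ℝ) ≤ 2 * (T : ℝ) := by exact_mod_cast hn
  calc ∑ i ∈ Finset.Icc 1 n, 1 / (c + (i : ℝ))
      ≤ ∑ i ∈ Finset.Icc 1 n, (1 / 2 : ℝ) := by
        apply Finset.sum_le_sum
        intro i hi
        have hi1 : (1 : ℝ) ≤ (i : ℝ) := by exact_mod_cast (Finset.mem_Icc.mp hi).1
        rw [div_le_div_iff₀ (by linarith) (by norm_num)]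
        linarith
    _ = (n : ℝ) * (1 / 2) := by
        rw [Finset.sum_const, Nat.card_Icc]
        simp [nsmul_eq_mul]
    _ < 2 * (T : ℝ) := by linarith

/-- The final estimate in the separation lemma: the positive quantity from the
fraction identity exceeds `2T`, which in turn exceeds the harmonic-type sum
`H_{T ± K}`, for both sign choices. -/
theorem final_estimate (T : ℕ) (hT : 1 ≤ T) :
    let ms : ℝ := 1 / 4
    let mb : ℝ := 1
    let wb : ℝ := (2 * (T : ℝ) + ms + mb) ^ 5
    ∀ K : ℕ, 1 ≤ K → K ≤ T →
      ((K : ℝ) ^ 2 * wb * mb ^ 2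
          / (((T : ℝ) + ms + mb) ^ 2 * ((T : ℝ) + (K : ℝ) + ms + mb) * ((T : ℝ) + (K : ℝ) + ms))
        > 2 * (T : ℝ)) ∧
      ((K : ℝ) ^ 2 * wb * mb ^ 2
          / (((T : ℝ) + ms + mb) ^ 2 * ((T : ℝ) - (K : ℝ) + ms + mb) * ((T : ℝ) - (K : ℝ) + ms))
        > 2 * (T : ℝ)) ∧
      (2 * (T : ℝ) > ∑ i ∈ Finset.Icc 1 (2 * T - (T + K)),
          1 / ((T : ℝ) + (K : ℝ) + ms + mb + (i : ℝ))) ∧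
      (2 * (T : ℝ) > ∑ i ∈ Finset.Icc 1 (2 * T - (T - K)),
          1 / ((T : ℝ) - (K : ℝ) + ms + mb + (i : ℝ))) := by
  intro ms mb wb K hK1 hKT
  simp only [ms, mb, wb]
  have ht : (1 : ℝ) ≤ (T : ℝ) := by exact_mod_cast hT
  have hk : (1 : ℝ) ≤ (K : ℝ) := by exact_mod_cast hK1
  have hkt : (K : ℝ) ≤ (T : ℝ) := by exact_mod_cast hKT
  refine ⟨?_, ?_, ?_, ?_⟩
  · exact key_frac (T : ℝ) (K : ℝ) _ _ ht hk (by linarith) (by linarith)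
      (by linarith) (by linarith)
  · exact key_frac (T : ℝ) (K : ℝ) _ _ ht hk (by linarith) (by linarith)
      (by linarith) (by linarith)
  · exact key_sum T hT _ (Nat.sub_le _ _) _ (by linarith)
  · exact key_sum T hT _ (Nat.sub_le _ _) _ (by linarith)
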